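/- For every sequence {q_n} of positive real numbers, the inequality 1 < n * (q_{n+1} - q_n + 1)/q_n holds for infinitely many natural numbers n. -/

import Mathlib

theorem one_lt_n_mul_ratio (q : ℕ → ℝ) (hq : ∀ n, 0 < q n) :
    {n : ℕ | 1 < (n : ℝ) * ((q (n + 1) - q n + 1) / q n)}.Infinite := by
  by_contra hfin
  rw [Set.not_infinite] at hfin
  obtain ⟨N, hN⟩ := hfin.bddAbove
  have key : ∀ n, N + 1 ≤ n → 1 / ((n : ℝ) + 1) + q (n + 1) / ((n : ℝ) + 1) ≤ q n / n := by
    intro n hn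
    have hnotin : n ∉ {n : ℕ | 1 < (n : ℝ) * ((q (n + 1) - q n + 1) / q n)} := by
      intro hmem
      exact absurd (hN hmem) (by omega)
    simp only [Set.mem_setOf_eq, not_lt] at hnotin
    have hqn := hq n
    have hle : (n : ℝ) * (q (n + 1) - q n + 1) ≤ q n := by
      rw [← mul_div_assoc, div_le_one hqn] at hnotin
      exact hnotin
    have hn0 : (0 : ℝ) < n := by
      have : 0 < n := by omega
      exact_mod_cast this
    have hn1 : (0 : ℝ) < (n : ℝ) + 1 := by linarith
    rw [← add_div, div_le_div_iff₀ hn1 hn0]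
    nlinarith [hq (n + 1)]
  set H : ℕ → ℝ := fun m => ∑ i ∈ Finset.range m, 1 / ((i : ℝ) + 1) with hH
  have tel : ∀ m, H (N + 1 + m) + q (N + 1 + m) / ((N : ℝ) + 1 + m) ≤
      H (N + 1) + q (N + 1) / ((N : ℝ) + 1) := by
    intro m
    induction m with
    | zero => simp
    | succ k ih =>
      have hk := key (N + 1 + k) (by omega)
      have hcast : ((N + 1 + k : ℕ) : ℝ) = (N : ℝ) + 1 + k := by push_cast; ring
      rw [hcast] at hk
      have hstep : H (N + 1 + (k + 1)) = H (N + 1 + k) + 1 / ((N : ℝ) + 1 + k + 1) := by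
        simp only [hH]
        rw [show N + 1 + (k + 1) = (N + 1 + k) + 1 from by omega, Finset.sum_range_succ]
        push_cast; ring
      have hcast2 : ((N : ℝ) + 1 + (k + 1 : ℕ)) = (N : ℝ) + 1 + k + 1 := by push_cast; ring
      have hq2 : q (N + 1 + (k + 1)) = q ((N + 1 + k) + 1) := by ring_nf
      rw [hstep, hcast2, hq2]
      linarith
  -- H is bounded on N+1+m, contradiction with divergence
  have htend := Real.tendsto_sum_range_one_div_nat_succ_atTop
  rw [Filter.tendsto_atTop] at htend
  obtain ⟨M, hM⟩ := Filter.eventually_atTop.mp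
    (htend (H (N + 1) + q (N + 1) / ((N : ℝ) + 1) + 1))
  have h1 : H (N + 1) + q (N + 1) / ((N : ℝ) + 1) + 1 ≤ H (N + 1 + M) :=
    hM (N + 1 + M) (by omega)
  have h2 : H (N + 1 + M) + q (N + 1 + M) / ((N : ℝ) + 1 + M) ≤
      H (N + 1) + q (N + 1) / ((N : ℝ) + 1) := tel M
  have hpos : 0 < q (N + 1 + M) / ((N : ℝ) + 1 + M) := by
    apply div_pos (hq _)
    positivity
  linarith
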